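/- Let X be a symmetric random variable with Λ finite near 0 and unbounded above. If X has regular upper tails and x_n = inf{t > 0 : P(X > t) ≤ (2 log n)/n}, then x_n / Λ*⁻¹(log n) → 1 as n → ∞. -/

import Mathlib

open MeasureTheory ProbabilityTheory Real Filter

noncomputable section

-- Log-moment generating function `Λ`, valued in `EReal` (`⊤` when the exponential
-- moment is infinite).
open Classical in
def lmgf {Ω : Type*} [MeasurableSpace Ω] (μ : Measure Ω) (X : Ω → ℝ) (s : ℝ) : EReal :=
  if Integrable (fun ω => Real.exp (s * X ω)) μ
  then ((Real.log (∫ ω, Real.exp (s * X ω) ∂μ) : ℝ) : EReal)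
  else ⊤

/-- The Legendre transform `Λ*` of the log-moment generating function (rate function). -/
def rateFn {Ω : Type*} [MeasurableSpace Ω] (μ : Measure Ω) (X : Ω → ℝ) (t : ℝ) : EReal :=
  ⨆ s : ℝ, ((s * t : ℝ) : EReal) - lmgf μ X s

/-- The generalised inverse `Λ*⁻¹(t) = inf {s ≥ 0 : Λ*(s) ≥ t}`. -/
def rateFnInv {Ω : Type*} [MeasurableSpace Ω] (μ : Measure Ω) (X : Ω → ℝ) (t : ℝ) : ℝ :=
  sInf {s : ℝ | 0 ≤ s ∧ (t : EReal) ≤ rateFn μ X s}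

/-- `X` is symmetric: `-X` has the same distribution as `X`. -/
def SymmetricRV {Ω : Type*} [MeasurableSpace Ω] (μ : Measure Ω) (X : Ω → ℝ) : Prop :=
  Measure.map X μ = Measure.map (fun ω => -X ω) μ

/-- `Λ` is finite in a neighbourhood of `0`. -/
def FiniteLmgfNearZero {Ω : Type*} [MeasurableSpace Ω] (μ : Measure Ω) (X : Ω → ℝ) : Prop :=
  ∃ δ > (0:ℝ), ∀ s : ℝ, |s| < δ → lmgf μ X s ≠ ⊤

/-- `X` has regular upper tails: `P(X > t) = exp(-(1+o(1)) Λ*(t))` as `t → ∞`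
(vacuous at points where `Λ*(t) = ∞`). -/
def RegularUpperTails {Ω : Type*} [MeasurableSpace Ω] (μ : Measure Ω) (X : Ω → ℝ) : Prop :=
  ∀ ε > (0:ℝ), ∀ᶠ t in atTop, ∀ r : ℝ, rateFn μ X t = (r : EReal) →
    Real.exp (-(1+ε)*r) ≤ (μ {ω | t < X ω}).toReal ∧
    (μ {ω | t < X ω}).toReal ≤ Real.exp (-(1-ε)*r)

/-- A good random variable: symmetric, `Λ` finite near `0`, regular upper tails. -/
def Good {Ω : Type*} [MeasurableSpace Ω] (μ : Measure Ω) (X : Ω → ℝ) : Prop :=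
  SymmetricRV μ X ∧ FiniteLmgfNearZero μ X ∧ RegularUpperTails μ X

/-- The non-diagonal elements of `Sym2 (Fin n)`: the edges of the complete graph `K_n`. -/
abbrev EdgeT (n : ℕ) := {e : Sym2 (Fin n) // ¬ e.IsDiag}


/-- Total weight of a subgraph `G'` of `K_n` with edge weights `x`. -/
def graphWeight {n : ℕ} (x : EdgeT n → ℝ) (G' : SimpleGraph (Fin n)) : ℝ :=
  ∑ e : EdgeT n, Set.indicator {e' : EdgeT n | (e' : Sym2 (Fin n)) ∈ G'.edgeSet} x e

/-- Total weight of the edges of a walk `p` with edge weights `x`. -/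
def walkWeight {n : ℕ} (x : EdgeT n → ℝ) {u v : Fin n}
    (p : (⊤ : SimpleGraph (Fin n)).Walk u v) : ℝ :=
  ∑ e : EdgeT n, Set.indicator {e' : EdgeT n | (e' : Sym2 (Fin n)) ∈ p.edges} x e

end

section Aux
section Aux
set_option linter.unusedSectionVars false
variable {Ω : Type*} [MeasurableSpace Ω] (μ : Measure Ω) [IsProbabilityMeasure μ] (X : Ω → ℝ)

lemma lmgf_zero : lmgf μ X 0 = 0 := by
  have h : (fun ω => Real.exp (0 * X ω)) = fun _ : Ω => (1:ℝ) := by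
    funext ω; simp
  rw [lmgf, h, if_pos (integrable_const 1)]
  simp

lemma measSet (hX : Measurable X) (t : ℝ) : MeasurableSet {ω | t < X ω} :=
  measurableSet_lt measurable_const hX

lemma lmgf_integrable {s : ℝ} (h : lmgf μ X s ≠ ⊤) :
    Integrable (fun ω => Real.exp (s * X ω)) μ := by
  by_contra hc
  rw [lmgf, if_neg hc] at h
  exact h rfl

lemma symm_int_iff (hX : Measurable X) (hsym : SymmetricRV μ X) (s : ℝ) :
    Integrable (fun ω => Real.exp (-s * X ω)) μ ↔
      Integrable (fun ω => Real.exp (s * X ω)) μ := by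
  have hg : Measurable (fun x : ℝ => Real.exp (s * x)) :=
    Real.measurable_exp.comp (measurable_id.const_mul s)
  have hfun : (fun ω => Real.exp (-s * X ω)) = fun ω => Real.exp (s * (-X ω)) := by
    funext ω; ring_nf
  rw [hfun]
  constructor
  · intro h
    have h1 : Integrable (fun x : ℝ => Real.exp (s * x)) (Measure.map (fun ω => -X ω) μ) :=
      (integrable_map_measure hg.aestronglyMeasurable hX.neg.aemeasurable).mpr h
    rw [← hsym] at h1
    exact (integrable_map_measure hg.aestronglyMeasurable hX.aemeasurable).mp h1
  · intro h
    have h1 : Integrable (fun x : ℝ => Real.exp (s * x)) (Measure.map X μ) :=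
      (integrable_map_measure hg.aestronglyMeasurable hX.aemeasurable).mpr h
    rw [hsym] at h1
    exact (integrable_map_measure hg.aestronglyMeasurable hX.neg.aemeasurable).mp h1

lemma symm_int_eq (hX : Measurable X) (hsym : SymmetricRV μ X) (s : ℝ) :
    ∫ ω, Real.exp (-s * X ω) ∂μ = ∫ ω, Real.exp (s * X ω) ∂μ := by
  have hg : Measurable (fun x : ℝ => Real.exp (s * x)) :=
    Real.measurable_exp.comp (measurable_id.const_mul s)
  have hfun : (fun ω => Real.exp (-s * X ω)) = fun ω => Real.exp (s * (-X ω)) := by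
    funext ω; ring_nf
  rw [hfun, ← integral_map (φ := fun ω => -X ω) hX.neg.aemeasurable hg.aestronglyMeasurable, ← hsym,
    integral_map hX.aemeasurable hg.aestronglyMeasurable]

lemma lmgf_nonneg (hX : Measurable X) (hsym : SymmetricRV μ X) (s : ℝ) :
    (0 : EReal) ≤ lmgf μ X s := by
  rw [lmgf]
  by_cases h : Integrable (fun ω => Real.exp (s * X ω)) μ
  · rw [if_pos h]
    have h2 : Integrable (fun ω => Real.exp (-s * X ω)) μ := (symm_int_iff μ X hX hsym s).mpr h
    have heq := symm_int_eq μ X hX hsym s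
    have hsum : (2:ℝ) ≤ ∫ ω, (Real.exp (s * X ω) + Real.exp (-s * X ω)) ∂μ := by
      have hle : ∫ ω, (2:ℝ) ∂μ ≤ ∫ ω, (Real.exp (s * X ω) + Real.exp (-s * X ω)) ∂μ := by
        refine integral_mono (integrable_const 2) (h.add h2) fun ω => ?_
        have ha := Real.exp_pos (s * X ω)
        have hinv : Real.exp (-(s * X ω)) = (Real.exp (s * X ω))⁻¹ := Real.exp_neg _
        have hthis : Real.exp (-s * X ω) = (Real.exp (s * X ω))⁻¹ := by rw [← hinv]; ring_nf
        rw [hthis]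
        have := mul_inv_cancel₀ (ne_of_gt ha)
        nlinarith [sq_nonneg (Real.exp (s * X ω) - 1)]
      simpa using hle
    have h1 : (1:ℝ) ≤ ∫ ω, Real.exp (s * X ω) ∂μ := by
      rw [integral_add h h2, heq] at hsum
      linarith
    exact_mod_cast EReal.coe_le_coe_iff.mpr (Real.log_nonneg h1)
  · rw [if_neg h]; exact le_top

lemma lmgf_cases (hX : Measurable X) (hsym : SymmetricRV μ X) (s : ℝ) :
    lmgf μ X s = ⊤ ∨ ∃ L : ℝ, lmgf μ X s = (L : EReal) ∧ 0 ≤ L := by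
  by_cases h : Integrable (fun ω => Real.exp (s * X ω)) μ
  · right
    refine ⟨Real.log (∫ ω, Real.exp (s * X ω) ∂μ), ?_, ?_⟩
    · rw [lmgf, if_pos h]
    · have := lmgf_nonneg μ X hX hsym s
      rw [lmgf, if_pos h] at this
      exact_mod_cast this
  · left; rw [lmgf, if_neg h]

end Aux

section Aux2
set_option linter.unusedSectionVars false
variable {Ω : Type*} [MeasurableSpace Ω] (μ : Measure Ω) [IsProbabilityMeasure μ] (X : Ω → ℝ)

lemma P_pos (hunb : ∀ t : ℝ, μ {ω | t < X ω} ≠ 0) (t : ℝ) :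
    0 < (μ {ω | t < X ω}).toReal :=
  ENNReal.toReal_pos (hunb t) (measure_ne_top μ _)

lemma P_le_one (t : ℝ) : (μ {ω | t < X ω}).toReal ≤ 1 := by
  have h := prob_le_one (μ := μ) (s := {ω | t < X ω})
  calc (μ {ω | t < X ω}).toReal ≤ (1 : ENNReal).toReal := ENNReal.toReal_mono ENNReal.one_ne_top h
  _ = 1 := by simp

lemma P_anti {s t : ℝ} (h : s ≤ t) :
    (μ {ω | t < X ω}).toReal ≤ (μ {ω | s < X ω}).toReal :=
  ENNReal.toReal_mono (measure_ne_top μ _)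
    (measure_mono (fun ω (hω : t < X ω) => lt_of_le_of_lt h hω))

lemma chernoff (hX : Measurable X) {s t : ℝ} (hs : 0 ≤ s)
    (hP : 0 < (μ {ω | t < X ω}).toReal) :
    ((s * t + Real.log ((μ {ω | t < X ω}).toReal) : ℝ) : EReal) ≤ lmgf μ X s := by
  rw [lmgf]
  split_ifs with h
  · rw [EReal.coe_le_coe_iff]
    have hmeas : MeasurableSet {ω | t < X ω} := measSet X hX t
    have key : Real.exp (s * t) * (μ {ω | t < X ω}).toReal ≤ ∫ ω, Real.exp (s * X ω) ∂μ := by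
      have h1 : ∫ _ω in {ω | t < X ω}, Real.exp (s * t) ∂μ
          = (μ {ω | t < X ω}).toReal * Real.exp (s * t) := by
        rw [setIntegral_const]; simp [smul_eq_mul]; rfl
      have h2 : ∫ ω in {ω | t < X ω}, Real.exp (s * t) ∂μ
          ≤ ∫ ω in {ω | t < X ω}, Real.exp (s * X ω) ∂μ := by
        refine setIntegral_mono_on (integrable_const _).integrableOn h.integrableOn hmeas
          fun ω hω => ?_
        exact Real.exp_le_exp.mpr (mul_le_mul_of_nonneg_left (le_of_lt hω) hs)
      have h3 : ∫ ω in {ω | t < X ω}, Real.exp (s * X ω) ∂μ ≤ ∫ ω, Real.exp (s * X ω) ∂μ :=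
        setIntegral_le_integral h (ae_of_all _ fun ω => (Real.exp_pos _).le)
      calc Real.exp (s * t) * (μ {ω | t < X ω}).toReal
          = ∫ _ω in {ω | t < X ω}, Real.exp (s * t) ∂μ := by rw [h1]; ring
        _ ≤ ∫ ω, Real.exp (s * X ω) ∂μ := le_trans h2 h3
    have hpos : 0 < Real.exp (s * t) * (μ {ω | t < X ω}).toReal :=
      mul_pos (Real.exp_pos _) hP
    calc s * t + Real.log ((μ {ω | t < X ω}).toReal)
        = Real.log (Real.exp (s * t) * (μ {ω | t < X ω}).toReal) := by
          rw [Real.log_mul (Real.exp_ne_zero _) (ne_of_gt hP), Real.log_exp]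
      _ ≤ Real.log (∫ ω, Real.exp (s * X ω) ∂μ) := Real.log_le_log hpos key
  · exact le_top

lemma rateFn_nonneg (t : ℝ) : (0 : EReal) ≤ rateFn μ X t := by
  have h := le_iSup (fun s : ℝ => ((s * t : ℝ) : EReal) - lmgf μ X s) 0
  rw [lmgf_zero] at h
  simp at h; exact h

lemma rateFn_lower {s₀ L : ℝ} (h : lmgf μ X s₀ = (L : EReal)) (t : ℝ) :
    ((s₀ * t - L : ℝ) : EReal) ≤ rateFn μ X t := by
  have hle := le_iSup (fun s : ℝ => ((s * t : ℝ) : EReal) - lmgf μ X s) s₀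
  rw [h] at hle
  rw [EReal.coe_sub]
  exact hle

lemma rateFn_le (hX : Measurable X) (hsym : SymmetricRV μ X) {t : ℝ} (ht : 0 ≤ t)
    (hP : 0 < (μ {ω | t < X ω}).toReal) :
    rateFn μ X t ≤ ((-Real.log ((μ {ω | t < X ω}).toReal) : ℝ) : EReal) := by
  refine iSup_le fun s => ?_
  have hlogP : Real.log ((μ {ω | t < X ω}).toReal) ≤ 0 :=
    Real.log_nonpos hP.le (P_le_one μ X t)
  rcases le_or_gt 0 s with hs | hs
  · rcases lmgf_cases μ X hX hsym s with hc | ⟨L, hL, _⟩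
    · rw [hc, EReal.sub_top]; exact bot_le
    · rw [hL, ← EReal.coe_sub, EReal.coe_le_coe_iff]
      have := chernoff μ X hX hs hP
      rw [hL, EReal.coe_le_coe_iff] at this
      linarith
  · have h1 : ((s * t : ℝ) : EReal) - lmgf μ X s ≤ ((s * t : ℝ) : EReal) - 0 :=
      EReal.sub_le_sub (le_refl _) (lmgf_nonneg μ X hX hsym s)
    rw [sub_zero] at h1
    refine h1.trans ?_
    rw [EReal.coe_le_coe_iff]
    nlinarith
end Aux2

section Aux3
set_option linter.unusedSectionVars false
variable {Ω : Type*} [MeasurableSpace Ω] (μ : Measure Ω) [IsProbabilityMeasure μ] (X : Ω → ℝ)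

lemma rateFn_real (hX : Measurable X) (hsym : SymmetricRV μ X)
    (hunb : ∀ t : ℝ, μ {ω | t < X ω} ≠ 0) {t : ℝ} (ht : 0 ≤ t) :
    ∃ r : ℝ, rateFn μ X t = (r : EReal) ∧ 0 ≤ r := by
  have hP := P_pos μ X hunb t
  have h1 := rateFn_nonneg μ X t
  have h2 := rateFn_le μ X hX hsym ht hP
  have hnb : rateFn μ X t ≠ ⊥ := by
    intro hb; rw [hb] at h1; exact (not_le.mpr (bot_lt_iff_ne_bot.mpr (by simp))) h1
  have hnt : rateFn μ X t ≠ ⊤ := (h2.trans_lt (EReal.coe_lt_top _)).ne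
  refine ⟨(rateFn μ X t).toReal, (EReal.coe_toReal hnt hnb).symm, ?_⟩
  have := EReal.coe_toReal hnt hnb
  rw [← this] at h1
  exact_mod_cast h1

lemma rateFn_mono (hX : Measurable X) (hsym : SymmetricRV μ X)
    {t₁ t₂ : ℝ} (h0 : 0 ≤ t₁) (h : t₁ ≤ t₂) : rateFn μ X t₁ ≤ rateFn μ X t₂ := by
  refine iSup_le fun s => ?_
  rcases le_or_gt 0 s with hs | hs
  · refine le_trans ?_ (le_iSup (fun s : ℝ => ((s * t₂ : ℝ) : EReal) - lmgf μ X s) s)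
    exact EReal.sub_le_sub (EReal.coe_le_coe_iff.mpr (mul_le_mul_of_nonneg_left h hs)) (le_refl _)
  · have h1 : ((s * t₁ : ℝ) : EReal) - lmgf μ X s ≤ ((s * t₁ : ℝ) : EReal) - 0 :=
      EReal.sub_le_sub (le_refl _) (lmgf_nonneg μ X hX hsym s)
    rw [sub_zero] at h1
    refine h1.trans (le_trans ?_ (rateFn_nonneg μ X t₂))
    rw [← EReal.coe_zero, EReal.coe_le_coe_iff]
    nlinarith

lemma rateFn_scale (hX : Measurable X) (hsym : SymmetricRV μ X)
    {l t r : ℝ} (hl0 : 0 ≤ l) (hl1 : l ≤ 1) (hr : rateFn μ X t = (r : EReal)) :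
    rateFn μ X (l * t) ≤ ((l * r : ℝ) : EReal) := by
  refine iSup_le fun s => ?_
  rcases lmgf_cases μ X hX hsym s with hc | ⟨L, hL, hL0⟩
  · rw [hc, EReal.sub_top]; exact bot_le
  · have hterm : ((s * t - L : ℝ) : EReal) ≤ (r : EReal) := by
      have hle := le_iSup (fun s' : ℝ => ((s' * t : ℝ) : EReal) - lmgf μ X s') s
      rw [hL, ← EReal.coe_sub] at hle
      rw [← hr] at *
      exact hle
    rw [EReal.coe_le_coe_iff] at hterm
    rw [hL, ← EReal.coe_sub, EReal.coe_le_coe_iff]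
    nlinarith

lemma exists_pos_finite (hX : Measurable X) (hsym : SymmetricRV μ X)
    (hfin : FiniteLmgfNearZero μ X) :
    ∃ s₀ : ℝ, 0 < s₀ ∧ ∃ L : ℝ, lmgf μ X s₀ = (L : EReal) ∧ 0 ≤ L := by
  obtain ⟨δ, hδ, h⟩ := hfin
  refine ⟨δ / 2, by linarith, ?_⟩
  have hne : lmgf μ X (δ / 2) ≠ ⊤ := h _ (by rw [abs_of_pos (by linarith)]; linarith)
  rcases lmgf_cases μ X hX hsym (δ / 2) with hc | hL
  · exact absurd hc hne
  · exact hL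

lemma P_tendsto_zero (hX : Measurable X) (hsym : SymmetricRV μ X)
    (hfin : FiniteLmgfNearZero μ X) {c : ℝ} (hc : 0 < c) :
    ∃ t : ℝ, 0 < t ∧ (μ {ω | t < X ω}).toReal ≤ c := by
  obtain ⟨s₀, hs₀, L, hL, _⟩ := exists_pos_finite μ X hX hsym hfin
  have hint : Integrable (fun ω => Real.exp (s₀ * X ω)) μ :=
    lmgf_integrable μ X (by rw [hL]; exact EReal.coe_ne_top L)
  set I := ∫ ω, Real.exp (s₀ * X ω) ∂μ with hI
  have hInn : 0 ≤ I := integral_nonneg fun ω => (Real.exp_pos _).le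
  -- choose t with exp (s₀ t) ≥ (I + 1) / c
  obtain ⟨t, ht⟩ : ∃ t : ℝ, 0 < t ∧ (I + 1) / c ≤ Real.exp (s₀ * t) := by
    refine ⟨max 1 (Real.log ((I + 1) / c) / s₀ + 1), lt_of_lt_of_le one_pos (le_max_left _ _), ?_⟩
    have h1 : Real.log ((I + 1) / c) / s₀ ≤ max 1 (Real.log ((I + 1) / c) / s₀ + 1) :=
      le_trans (by linarith) (le_max_right _ _)
    have h2 : Real.log ((I + 1) / c) ≤ s₀ * max 1 (Real.log ((I + 1) / c) / s₀ + 1) := by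
      rw [← div_le_iff₀' hs₀]; exact h1
    calc (I + 1) / c = Real.exp (Real.log ((I + 1) / c)) := by
          rw [Real.exp_log (div_pos (by linarith) hc)]
      _ ≤ Real.exp (s₀ * max 1 (Real.log ((I + 1) / c) / s₀ + 1)) := Real.exp_le_exp.mpr h2
  refine ⟨t, ht.1, ?_⟩
  have hmarkov : Real.exp (s₀ * t) * (μ {ω | Real.exp (s₀ * t) ≤ Real.exp (s₀ * X ω)}).toReal
      ≤ I := mul_meas_ge_le_integral_of_nonneg (ae_of_all _ fun ω => (Real.exp_pos _).le)
      hint _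
  have hsub : (μ {ω | t < X ω}).toReal
      ≤ (μ {ω | Real.exp (s₀ * t) ≤ Real.exp (s₀ * X ω)}).toReal := by
    refine ENNReal.toReal_mono (measure_ne_top μ _) (measure_mono fun ω hω => ?_)
    exact Real.exp_le_exp.mpr (mul_le_mul_of_nonneg_left (le_of_lt hω) hs₀.le)
  have hexp : 0 < Real.exp (s₀ * t) := Real.exp_pos _
  have h4 : (μ {ω | Real.exp (s₀ * t) ≤ Real.exp (s₀ * X ω)}).toReal ≤ I / Real.exp (s₀ * t) := by
    rw [le_div_iff₀ hexp]; linarith [hmarkov]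
  have h5 : I / Real.exp (s₀ * t) ≤ c := by
    rw [div_le_iff₀ hexp]
    calc I ≤ ((I + 1) / c) * c := by field_simp; linarith
      _ ≤ c * Real.exp (s₀ * t) := by nlinarith [ht.2, hc]
  linarith [hsub, h4, h5]

end Aux3

section Aux4
set_option linter.unusedSectionVars false
variable {Ω : Type*} [MeasurableSpace Ω] (μ : Measure Ω) [IsProbabilityMeasure μ] (X : Ω → ℝ)

lemma invSet_nonempty (hX : Measurable X) (hsym : SymmetricRV μ X)
    (hfin : FiniteLmgfNearZero μ X) (y : ℝ) :
    {s : ℝ | 0 ≤ s ∧ (y : EReal) ≤ rateFn μ X s}.Nonempty := by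
  obtain ⟨s₀, hs₀, L, hL, hL0⟩ := exists_pos_finite μ X hX hsym hfin
  refine ⟨max 0 ((y + L) / s₀), le_max_left _ _, ?_⟩
  have h1 : (y + L) / s₀ ≤ max 0 ((y + L) / s₀) := le_max_right _ _
  have h2 : y + L ≤ s₀ * max 0 ((y + L) / s₀) := by
    rw [← div_le_iff₀' hs₀]; exact h1
  have h3 : y ≤ s₀ * max 0 ((y + L) / s₀) - L := by linarith
  calc (y : EReal) ≤ ((s₀ * max 0 ((y + L) / s₀) - L : ℝ) : EReal) := EReal.coe_le_coe_iff.mpr h3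
    _ ≤ rateFn μ X (max 0 ((y + L) / s₀)) := rateFn_lower μ X hL _

lemma invSet_bdd (y : ℝ) : BddBelow {s : ℝ | 0 ≤ s ∧ (y : EReal) ≤ rateFn μ X s} :=
  ⟨0, fun s hs => hs.1⟩

lemma rateInv_nonneg (hX : Measurable X) (hsym : SymmetricRV μ X)
    (hfin : FiniteLmgfNearZero μ X) (y : ℝ) : 0 ≤ rateFnInv μ X y :=
  le_csInf (invSet_nonempty μ X hX hsym hfin y) fun s hs => hs.1

lemma inv_spec_gt (hX : Measurable X) (hsym : SymmetricRV μ X)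
    (hfin : FiniteLmgfNearZero μ X) {y s : ℝ} (h : rateFnInv μ X y < s) :
    (y : EReal) ≤ rateFn μ X s := by
  obtain ⟨s', hs', hlt⟩ := exists_lt_of_csInf_lt (invSet_nonempty μ X hX hsym hfin y) h
  exact hs'.2.trans (rateFn_mono μ X hX hsym hs'.1 hlt.le)

lemma inv_spec_lt {y s : ℝ} (h0 : 0 ≤ s) (h : s < rateFnInv μ X y) :
    rateFn μ X s < (y : EReal) := by
  have := notMem_of_lt_csInf (s := {s : ℝ | 0 ≤ s ∧ (y : EReal) ≤ rateFn μ X s}) h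
    (invSet_bdd μ X y)
  simp only [Set.mem_setOf_eq, not_and, not_le] at this
  exact this h0

lemma inv_tendsto (hX : Measurable X) (hsym : SymmetricRV μ X)
    (hfin : FiniteLmgfNearZero μ X) (hunb : ∀ t : ℝ, μ {ω | t < X ω} ≠ 0) :
    Tendsto (rateFnInv μ X) atTop atTop := by
  rw [tendsto_atTop]
  intro M
  set M' := max M 0 with hM'
  filter_upwards [eventually_ge_atTop (-Real.log ((μ {ω | M' < X ω}).toReal) + 1)] with y hy
  have hMle : M' ≤ rateFnInv μ X y := by
    refine le_csInf (invSet_nonempty μ X hX hsym hfin y) fun s hs => ?_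
    by_contra hc
    push_neg at hc
    have h1 : rateFn μ X s ≤ rateFn μ X M' := rateFn_mono μ X hX hsym hs.1 hc.le
    have h2 : rateFn μ X M' ≤ ((-Real.log ((μ {ω | M' < X ω}).toReal) : ℝ) : EReal) :=
      rateFn_le μ X hX hsym (le_max_right _ _) (P_pos μ X hunb M')
    have h3 : (y : EReal) ≤ ((-Real.log ((μ {ω | M' < X ω}).toReal) : ℝ) : EReal) :=
      hs.2.trans (h1.trans h2)
    rw [EReal.coe_le_coe_iff] at h3
    linarith
  exact le_trans (le_max_left _ _) hMle

end Aux4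

section Aux5
set_option linter.unusedSectionVars false
set_option maxHeartbeats 800000
variable {Ω : Type*} [MeasurableSpace Ω] (μ : Measure Ω) [IsProbabilityMeasure μ] (X : Ω → ℝ)

lemma quant_bdd (n : ℕ) :
    BddBelow {t : ℝ | 0 < t ∧ (μ {ω | t < X ω}).toReal ≤ 2 * Real.log n / n} :=
  ⟨0, fun u hu => hu.1.le⟩

lemma hlog_tendsto : Tendsto (fun n : ℕ => Real.log n) atTop atTop :=
  Real.tendsto_log_atTop.comp tendsto_natCast_atTop_atTop

lemma upper_bound (hX : Measurable X) (hsym : SymmetricRV μ X)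
    (hfin : FiniteLmgfNearZero μ X) (hunb : ∀ t : ℝ, μ {ω | t < X ω} ≠ 0)
    (hreg : RegularUpperTails μ X) {η : ℝ} (hη : 0 < η) (hη1 : η < 1) :
    ∀ᶠ n : ℕ in atTop,
      sInf {t : ℝ | 0 < t ∧ (μ {ω | t < X ω}).toReal ≤ 2 * Real.log n / n}
        ≤ (1 + η) * rateFnInv μ X (Real.log n) := by
  obtain ⟨c, hc⟩ : ∃ c : ℝ, c = (1 + η) / (1 + η / 2) := ⟨_, rfl⟩
  have hc1 : (1:ℝ) < c := by rw [hc, lt_div_iff₀ (by linarith)]; linarith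
  have hc0 : (0:ℝ) < c := by linarith
  obtain ⟨ε, hεdef⟩ : ∃ ε : ℝ, ε = (c - 1) / (2 * c) := ⟨_, rfl⟩
  have hε : 0 < ε := hεdef ▸ div_pos (by linarith) (by linarith)
  have hε1 : ε < 1 := by rw [hεdef, div_lt_one (by linarith)]; linarith
  obtain ⟨γ, hγdef⟩ : ∃ γ : ℝ, γ = (c - 1) / 2 := ⟨_, rfl⟩
  have hγ : 0 < γ := hγdef ▸ by linarith
  have key : (1 - ε) * c = 1 + γ := by
    rw [hεdef, hγdef]; field_simp; ring
  have hrtends : Tendsto (fun n : ℕ => rateFnInv μ X (Real.log n)) atTop atTop :=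
    (inv_tendsto μ X hX hsym hfin hunb).comp (hlog_tendsto)
  have htt : Tendsto (fun n : ℕ => (1 + η) * rateFnInv μ X (Real.log n)) atTop atTop :=
    hrtends.const_mul_atTop (by linarith)
  filter_upwards [htt.eventually (hreg ε hε), hrtends.eventually_ge_atTop 1,
    (hlog_tendsto).eventually_ge_atTop 1, eventually_ge_atTop 1] with n h1 h2 h3 h4
  have hn0 : (0:ℝ) < n := by exact_mod_cast Nat.lt_of_lt_of_le Nat.zero_lt_one h4
  obtain ⟨R, hRdef⟩ : ∃ R : ℝ, R = rateFnInv μ X (Real.log n) := ⟨_, rfl⟩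
  rw [← hRdef] at h1 h2 ⊢
  have hR0 : (0:ℝ) < R := lt_of_lt_of_le one_pos h2
  have ht0 : (0:ℝ) < (1 + η) * R := mul_pos (by linarith) hR0
  obtain ⟨r, hrEq, hr0⟩ := rateFn_real μ X hX hsym hunb ht0.le
  have hub : (μ {ω | (1 + η) * R < X ω}).toReal ≤ Real.exp (-(1 - ε) * r) := (h1 r hrEq).2
  have hs' : R < (1 + η / 2) * R := by nlinarith
  have h5 : ((Real.log n : ℝ) : EReal) ≤ rateFn μ X ((1 + η / 2) * R) := by
    refine inv_spec_gt μ X hX hsym hfin ?_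
    rw [← hRdef]; exact hs'
  obtain ⟨r', hr'Eq, hr'0⟩ := rateFn_real μ X hX hsym hunb
    (by nlinarith : (0:ℝ) ≤ (1 + η / 2) * R)
  have h6 : Real.log n ≤ r' := by
    rw [hr'Eq, EReal.coe_le_coe_iff] at h5; exact h5
  obtain ⟨l, hldef⟩ : ∃ l : ℝ, l = (1 + η / 2) / (1 + η) := ⟨_, rfl⟩
  have hl0 : 0 ≤ l := hldef ▸ by positivity
  have hl1 : l ≤ 1 := by rw [hldef, div_le_one (by linarith)]; linarith
  have hlt : l * ((1 + η) * R) = (1 + η / 2) * R := by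
    rw [hldef]; field_simp
  have h7 := rateFn_scale μ X hX hsym hl0 hl1 hrEq
  rw [hlt, hr'Eq, EReal.coe_le_coe_iff] at h7
  have hcl : c * l = 1 := by rw [hc, hldef]; field_simp
  have h8 : c * Real.log n ≤ r := by nlinarith
  have h9 : (1 + γ) * Real.log n ≤ (1 - ε) * r := by
    calc (1 + γ) * Real.log n = (1 - ε) * (c * Real.log n) := by rw [← key]; ring
      _ ≤ (1 - ε) * r := by nlinarith
  have h10 : (μ {ω | (1 + η) * R < X ω}).toReal ≤ 2 * Real.log n / n := by
    have e1 : Real.exp (-(1 - ε) * r) ≤ Real.exp (-(1 + γ) * Real.log n) :=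
      Real.exp_le_exp.mpr (by linarith)
    have e2 : Real.exp (-(1 + γ) * Real.log n)
        = Real.exp (-γ * Real.log n) * Real.exp (-Real.log n) := by
      rw [← Real.exp_add]; ring_nf
    have e3 : Real.exp (-Real.log n) = ((n:ℝ))⁻¹ := by
      rw [Real.exp_neg, Real.exp_log hn0]
    have e4 : Real.exp (-γ * Real.log n) ≤ 1 := Real.exp_le_one_iff.mpr (by nlinarith)
    have e5 : Real.exp (-(1 + γ) * Real.log n) ≤ ((n:ℝ))⁻¹ := by
      rw [e2, e3]
      nlinarith [inv_nonneg.mpr hn0.le, Real.exp_pos (-γ * Real.log n)]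
    have e6 : ((n:ℝ))⁻¹ ≤ 2 * Real.log n / n := by
      rw [inv_eq_one_div, div_le_div_iff_of_pos_right hn0]; linarith
    linarith
  exact csInf_le (quant_bdd μ X n) ⟨ht0, h10⟩

lemma lower_bound (hX : Measurable X) (hsym : SymmetricRV μ X)
    (hfin : FiniteLmgfNearZero μ X) (hunb : ∀ t : ℝ, μ {ω | t < X ω} ≠ 0)
    (hreg : RegularUpperTails μ X) {η : ℝ} (hη : 0 < η) (hη1 : η < 1) :
    ∀ᶠ n : ℕ in atTop,
      (1 - η) * rateFnInv μ X (Real.log n)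
        ≤ sInf {t : ℝ | 0 < t ∧ (μ {ω | t < X ω}).toReal ≤ 2 * Real.log n / n} := by
  have hd0 : (0:ℝ) < 1 - η / 2 := by linarith
  obtain ⟨l, hldef⟩ : ∃ l : ℝ, l = (1 - η) / (1 - η / 2) := ⟨_, rfl⟩
  have hl0 : 0 < l := hldef ▸ div_pos (by linarith) hd0
  have hl1 : l < 1 := by rw [hldef, div_lt_one hd0]; linarith
  obtain ⟨ε, hεdef⟩ : ∃ ε : ℝ, ε = (1 - l) / 2 := ⟨_, rfl⟩
  have hε : 0 < ε := hεdef ▸ by linarith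
  obtain ⟨γ, hγdef⟩ : ∃ γ : ℝ, γ = 1 - (1 + ε) * l := ⟨_, rfl⟩
  have hγ : 0 < γ := by rw [hγdef, hεdef]; nlinarith
  have hrtends : Tendsto (fun n : ℕ => rateFnInv μ X (Real.log n)) atTop atTop :=
    (inv_tendsto μ X hX hsym hfin hunb).comp (hlog_tendsto)
  have htt : Tendsto (fun n : ℕ => (1 - η) * rateFnInv μ X (Real.log n)) atTop atTop :=
    hrtends.const_mul_atTop (by linarith)
  have hexpgrow : ∀ᶠ L : ℝ in atTop, 2 * L < Real.exp (γ * L) := by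
    have h := Real.tendsto_exp_div_pow_atTop 1
    have h2 : Tendsto (fun L : ℝ => Real.exp (γ * L) / (γ * L)) atTop atTop := by
      have := h.comp (tendsto_id.const_mul_atTop hγ)
      simpa [Function.comp_def] using this
    filter_upwards [h2.eventually_ge_atTop (3 / γ), eventually_gt_atTop 0] with L hL hL0
    have hγL : 0 < γ * L := mul_pos hγ hL0
    rw [div_le_div_iff₀ hγ hγL] at hL
    nlinarith [hL]
  filter_upwards [htt.eventually (hreg ε hε), hrtends.eventually_ge_atTop 1,
    (hlog_tendsto).eventually_ge_atTop 1, eventually_ge_atTop 1,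
    (hlog_tendsto).eventually hexpgrow] with n h1 h2 h3 h4 h5
  have hn0 : (0:ℝ) < n := by exact_mod_cast Nat.lt_of_lt_of_le Nat.zero_lt_one h4
  obtain ⟨R, hRdef⟩ : ∃ R : ℝ, R = rateFnInv μ X (Real.log n) := ⟨_, rfl⟩
  rw [← hRdef] at h1 h2 ⊢
  have hR0 : (0:ℝ) < R := lt_of_lt_of_le one_pos h2
  have ht0 : (0:ℝ) < (1 - η) * R := mul_pos (by linarith) hR0
  obtain ⟨r, hrEq, hr0⟩ := rateFn_real μ X hX hsym hunb ht0.le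
  have hlb : Real.exp (-(1 + ε) * r) ≤ (μ {ω | (1 - η) * R < X ω}).toReal := (h1 r hrEq).1
  have hs'0 : (0:ℝ) ≤ (1 - η / 2) * R := by nlinarith
  have hs'R : (1 - η / 2) * R < R := by nlinarith
  obtain ⟨r', hr'Eq, hr'0⟩ := rateFn_real μ X hX hsym hunb hs'0
  have h6 : r' < Real.log n := by
    have h := inv_spec_lt μ X (y := Real.log n) hs'0 (by rw [← hRdef]; exact hs'R)
    rw [hr'Eq, EReal.coe_lt_coe_iff] at h; exact h
  have hls' : l * ((1 - η / 2) * R) = (1 - η) * R := by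
    rw [hldef, ← mul_assoc, div_mul_cancel₀ _ (ne_of_gt hd0)]
  have h7 := rateFn_scale μ X hX hsym hl0.le hl1.le hr'Eq
  rw [hls', hrEq, EReal.coe_le_coe_iff] at h7
  have h8 : r ≤ l * Real.log n := by nlinarith
  have h9 : 2 * Real.log n / n < (μ {ω | (1 - η) * R < X ω}).toReal := by
    have e1 : Real.exp ((γ - 1) * Real.log n) ≤ Real.exp (-(1 + ε) * r) := by
      refine Real.exp_le_exp.mpr ?_
      have e0 : (1 + ε) * r ≤ (1 + ε) * (l * Real.log n) := by nlinarith
      have h01 : (1 + ε) * (l * Real.log n) = (1 - γ) * Real.log n := by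
        rw [hγdef]; ring
      nlinarith [e0, h01]
    have e2 : Real.exp ((γ - 1) * Real.log n)
        = Real.exp (γ * Real.log n) * ((n:ℝ))⁻¹ := by
      have einv : ((n:ℝ))⁻¹ = Real.exp (-Real.log n) := by
        rw [Real.exp_neg, Real.exp_log hn0]
      rw [einv, ← Real.exp_add]
      congr 1
      ring
    have e3 : 2 * Real.log n / n < Real.exp (γ * Real.log n) * ((n:ℝ))⁻¹ := by
      rw [div_eq_mul_inv]
      exact mul_lt_mul_of_pos_right h5 (inv_pos.mpr hn0)
    calc 2 * Real.log n / n < Real.exp (γ * Real.log n) * ((n:ℝ))⁻¹ := e3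
      _ = Real.exp ((γ - 1) * Real.log n) := e2.symm
      _ ≤ Real.exp (-(1 + ε) * r) := e1
      _ ≤ (μ {ω | (1 - η) * R < X ω}).toReal := hlb
  have hQne : {u : ℝ | 0 < u ∧ (μ {ω | u < X ω}).toReal ≤ 2 * Real.log n / n}.Nonempty := by
    have hcpos : 0 < 2 * Real.log n / n := by
      apply div_pos (by linarith) hn0
    obtain ⟨u, hu0, huP⟩ := P_tendsto_zero μ X hX hsym hfin hcpos
    exact ⟨u, hu0, huP⟩
  refine le_csInf hQne fun u hu => ?_
  by_contra hcu
  push_neg at hcu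
  have hPP : (μ {ω | (1 - η) * R < X ω}).toReal ≤ (μ {ω | u < X ω}).toReal :=
    P_anti μ X hcu.le
  have := hu.2
  linarith [h9]

end Aux5

/-- for a symmetric random variable with `Λ` finite near `0`, unbounded above,
with regular upper tails, the quantile `x_n = inf {t > 0 : P(X > t) ≤ (2 log n)/n}`
satisfies `x_n / Λ*⁻¹(log n) → 1`. -/
theorem quantile_ratio_tendsto_one {Ω : Type*} [MeasurableSpace Ω] (μ : Measure Ω)
    [IsProbabilityMeasure μ] (X : Ω → ℝ) (hX : Measurable X)
    (hsym : SymmetricRV μ X) (hfin : FiniteLmgfNearZero μ X)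
    (hunb : ∀ t : ℝ, μ {ω | t < X ω} ≠ 0)
    (hreg : RegularUpperTails μ X) :
    Tendsto (fun n : ℕ =>
        sInf {t : ℝ | 0 < t ∧ (μ {ω | t < X ω}).toReal ≤ 2 * Real.log n / n} /
          rateFnInv μ X (Real.log n)) atTop (nhds 1) := by
  rw [Metric.tendsto_atTop]
  intro ε hε
  obtain ⟨η, hηdef⟩ : ∃ η : ℝ, η = min (ε / 2) (1 / 2) := ⟨_, rfl⟩
  have hη0 : 0 < η := by rw [hηdef]; positivity
  have hη1 : η < 1 := by
    have : η ≤ 1 / 2 := hηdef ▸ min_le_right _ _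
    linarith
  have hηε : η < ε := by
    have : η ≤ ε / 2 := hηdef ▸ min_le_left _ _
    linarith
  have hA := upper_bound μ X hX hsym hfin hunb hreg hη0 hη1
  have hB := lower_bound μ X hX hsym hfin hunb hreg hη0 hη1
  have hrtends : Tendsto (fun n : ℕ => rateFnInv μ X (Real.log n)) atTop atTop :=
    (inv_tendsto μ X hX hsym hfin hunb).comp (hlog_tendsto)
  have hRev : ∀ᶠ n : ℕ in atTop, 1 ≤ rateFnInv μ X (Real.log n) :=
    hrtends.eventually_ge_atTop 1
  obtain ⟨N, hN⟩ := eventually_atTop.mp (hA.and (hB.and hRev))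
  refine ⟨N, fun n hn => ?_⟩
  obtain ⟨h1, h2, h3⟩ := hN n hn
  have hR0 : 0 < rateFnInv μ X (Real.log n) := lt_of_lt_of_le one_pos h3
  rw [Real.dist_eq, abs_lt]
  constructor
  · have hup : (1 - η) ≤ sInf {t : ℝ | 0 < t ∧ (μ {ω | t < X ω}).toReal
        ≤ 2 * Real.log n / n} / rateFnInv μ X (Real.log n) :=
      (le_div_iff₀ hR0).mpr h2
    linarith
  · have hdn : sInf {t : ℝ | 0 < t ∧ (μ {ω | t < X ω}).toReal
        ≤ 2 * Real.log n / n} / rateFnInv μ X (Real.log n) ≤ 1 + η :=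
      (div_le_iff₀ hR0).mpr (by linarith [h1])
    linarith
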